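/- If y^b is a minimal monomial generator of E_q^{(2)}, then b_A ≤ 2 for every nonempty A ⊆ [q], and b_{[q]} = 2. -/

import Mathlib

open MvPolynomial

/-- Index type: nonempty subsets of `[q]`. -/
abbrev EIdx (q : ℕ) := {A : Finset (Fin q) // A.Nonempty}

/-- The generator `ε_i = ∏_{A ∋ i} y_A` of the extremal ideal. -/
noncomputable def extGen (k : Type*) [Field k] (q : ℕ) (i : Fin q) :
    MvPolynomial (EIdx q) k :=
  ∏ A : EIdx q, if i ∈ A.1 then X A else 1

/-- The `q`-extremal ideal `E_q = (ε_1, …, ε_q)`. -/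
noncomputable def extIdeal (k : Type*) [Field k] (q : ℕ) :
    Ideal (MvPolynomial (EIdx q) k) :=
  Ideal.span (Set.range (extGen k q))

/-- The `r`-th symbolic power of a square-free monomial ideal: the intersection
of the `r`-th powers of its minimal primes. -/
def symbPow {R : Type*} [CommRing R] (I : Ideal R) (r : ℕ) : Ideal R :=
  ⨅ P ∈ I.minimalPrimes, P ^ r

/-- The monomial `y^b = ∏_{∅ ≠ A ⊆ [q]} y_A^{b_A}`. -/
noncomputable def ymonF (k : Type*) [Field k] (q : ℕ)
    (b : Finset (Fin q) → ℕ) : MvPolynomial (EIdx q) k :=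
  ∏ A : EIdx q, X A ^ b A.1

/-- A minimal set cover of `[q]`: a collection of nonempty subsets whose union is
`[q]`, with no member contained in the union of the others. -/
def IsMinSetCover (q : ℕ) (C : Finset (Finset (Fin q))) : Prop :=
  (∀ A ∈ C, A.Nonempty) ∧ C.sup id = Finset.univ ∧
    ∀ A ∈ C, ¬ A ⊆ (C.erase A).sup id

section Aux
set_option linter.unusedSectionVars false
open scoped Classical

variable {k : Type*} [Field k] {σ : Type*} [Fintype σ] [DecidableEq σ]

/-- The algebra map killing the variables in `V`. -/
noncomputable def killV (k : Type*) [Field k] {σ : Type*} (V : Set σ) :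
    MvPolynomial σ k →ₐ[k] MvPolynomial σ k :=
  aeval (fun i => if i ∈ V then 0 else X i)

lemma sub_killV_mem (V : Set σ) (p : MvPolynomial σ k) :
    p - killV k V p ∈ Ideal.span (X '' V : Set (MvPolynomial σ k)) := by
  induction p using MvPolynomial.induction_on with
  | C a => simp [killV]
  | add p q hp hq =>
      have := Ideal.add_mem _ hp hq
      simpa [sub_add_sub_comm] using this
  | mul_X p n hp =>
      rw [map_mul]
      by_cases hn : n ∈ V
      · have h1 : p * X n ∈ Ideal.span (X '' V : Set (MvPolynomial σ k)) :=
          Ideal.mul_mem_left _ _ (Ideal.subset_span ⟨n, hn, rfl⟩)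
        simpa [killV, hn] using h1
      · have : p * X n - killV k V p * killV k V (X n)
            = (p - killV k V p) * X n := by
          simp [killV, hn]; ring
        rw [this]
        exact Ideal.mul_mem_right _ _ hp

lemma spanX_eq_ker (V : Set σ) :
    Ideal.span (X '' V : Set (MvPolynomial σ k))
      = RingHom.ker (killV k V (σ := σ)) := by
  apply le_antisymm
  · rw [Ideal.span_le]
    rintro _ ⟨i, hi, rfl⟩
    simp [RingHom.mem_ker, killV, hi]
  · intro p hp
    rw [RingHom.mem_ker] at hp
    have := sub_killV_mem V p
    rwa [hp, sub_zero] at this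

lemma isPrime_spanX (V : Set σ) :
    (Ideal.span (X '' V : Set (MvPolynomial σ k))).IsPrime := by
  rw [spanX_eq_ker]
  exact RingHom.ker_isPrime _

lemma X_mem_spanX_iff (V : Set σ) (i : σ) :
    X i ∈ Ideal.span (X '' V : Set (MvPolynomial σ k)) ↔ i ∈ V := by
  constructor
  · intro h
    rw [spanX_eq_ker, RingHom.mem_ker] at h
    simp only [killV, aeval_X] at h
    by_contra hi
    rw [if_neg hi] at h
    exact X_ne_zero i h
  · intro h
    exact Ideal.subset_span ⟨i, h, rfl⟩

/-- Forward: membership in the square of a variable ideal forces weighted degree ≥ 2. -/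
lemma two_le_wsum_of_mem_sq (V : Set σ) (c : σ → ℕ)
    (h : (∏ i, X i ^ c i : MvPolynomial σ k) ∈ Ideal.span (X '' V) ^ 2) :
    2 ≤ ∑ i, if i ∈ V then c i else 0 := by
  set ψ : MvPolynomial σ k →ₐ[k] Polynomial (MvPolynomial σ k) :=
    aeval (fun i => if i ∈ V then Polynomial.X * Polynomial.C (X i) else Polynomial.C (X i))
    with hψ
  have hmap : Ideal.map (ψ : MvPolynomial σ k →+* Polynomial (MvPolynomial σ k))
      (Ideal.span (X '' V)) ≤ Ideal.span {(Polynomial.X : Polynomial (MvPolynomial σ k))} := by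
    rw [Ideal.map_span, Ideal.span_le]
    rintro _ ⟨_, ⟨i, hi, rfl⟩, rfl⟩
    show ψ (X i) ∈ _
    rw [hψ]
    simp only [aeval_X, if_pos hi]
    exact Ideal.mem_span_singleton.mpr ⟨Polynomial.C (X i), rfl⟩
  have h2 : ψ (∏ i, X i ^ c i) ∈
      Ideal.span {(Polynomial.X : Polynomial (MvPolynomial σ k)) ^ 2} := by
    have hm := Ideal.mem_map_of_mem (ψ : MvPolynomial σ k →+* Polynomial (MvPolynomial σ k)) h
    rw [Ideal.map_pow] at hm
    have hle := Ideal.pow_right_mono hmap 2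
    rw [Ideal.span_singleton_pow] at hle
    exact hle hm
  set D : ℕ := ∑ i, if i ∈ V then c i else 0 with hD
  have hcomp : ψ (∏ i, X i ^ c i)
      = Polynomial.X ^ D * Polynomial.C (∏ i, X i ^ c i) := by
    rw [map_prod]
    have hfac : ∀ i : σ, ψ (X i ^ c i)
        = Polynomial.X ^ (if i ∈ V then c i else 0) * Polynomial.C (X i ^ c i) := by
      intro i
      rw [map_pow, hψ]
      simp only [aeval_X]
      by_cases hi : i ∈ V
      · rw [if_pos hi, if_pos hi, mul_pow, Polynomial.C_pow]
      · rw [if_neg hi, if_neg hi, pow_zero, one_mul, Polynomial.C_pow]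
    rw [Finset.prod_congr rfl (fun i _ => hfac i), Finset.prod_mul_distrib,
      Finset.prod_pow_eq_pow_sum, ← map_prod, hD]
  have hne : (∏ i, X i ^ c i : MvPolynomial σ k) ≠ 0 := by
    apply Finset.prod_ne_zero_iff.mpr
    intro i _
    exact pow_ne_zero _ (X_ne_zero i)
  rw [hcomp, Ideal.mem_span_singleton, Polynomial.X_pow_dvd_iff] at h2
  by_contra hlt
  push_neg at hlt
  have hval := Polynomial.coeff_X_pow_mul
    (Polynomial.C (∏ i, X i ^ c i : MvPolynomial σ k)) D 0
  rw [zero_add, Polynomial.coeff_C_zero] at hval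
  exact hne (by rw [← hval]; exact h2 D hlt)

/-- Backward: weighted degree ≥ 2 implies membership in the square. -/
lemma mem_sq_of_two_le_wsum (V : Set σ) (c : σ → ℕ)
    (h : 2 ≤ ∑ i, if i ∈ V then c i else 0) :
    (∏ i, X i ^ c i : MvPolynomial σ k) ∈ Ideal.span (X '' V) ^ 2 := by
  set P : Ideal (MvPolynomial σ k) := Ideal.span (X '' V) with hP
  have hXP : ∀ i ∈ V, X i ∈ P := fun i hi => Ideal.subset_span ⟨i, hi, rfl⟩
  set g : σ → ℕ := fun i => if i ∈ V then c i else 0 with hg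
  by_cases hex : ∃ i ∈ V, 2 ≤ c i
  · obtain ⟨i, hiV, hi2⟩ := hex
    have hdvd : X i ^ 2 ∣ (∏ j, X j ^ c j : MvPolynomial σ k) :=
      dvd_trans (pow_dvd_pow _ hi2) (Finset.dvd_prod_of_mem _ (Finset.mem_univ i))
    obtain ⟨m, hm⟩ := hdvd
    rw [hm]
    exact Ideal.mul_mem_right _ _ (Ideal.pow_mem_pow (hXP i hiV) 2)
  · push_neg at hex
    have hgi : ∃ i, g i ≠ 0 := by
      by_contra hc
      push_neg at hc
      rw [Finset.sum_congr rfl (fun i _ => hc i)] at h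
      simp at h
    obtain ⟨i, hi0⟩ := hgi
    have hiV : i ∈ V := by by_contra hc; exact hi0 (if_neg hc)
    have hgv : g i = c i := if_pos hiV
    have hci : c i ≠ 0 := by rw [← hgv]; exact hi0
    have hsplit : g i + ∑ j ∈ Finset.univ.erase i, g j = ∑ j, g j :=
      Finset.add_sum_erase _ _ (Finset.mem_univ i)
    have hrest : ∑ j ∈ Finset.univ.erase i, g j ≠ 0 := by
      have hlt : c i < 2 := hex i hiV
      rw [← hsplit] at h
      omega
    obtain ⟨j, hj, hj0⟩ := Finset.exists_ne_zero_of_sum_ne_zero hrest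
    have hji : j ≠ i := (Finset.mem_erase.mp hj).1
    have hjV : j ∈ V := by by_contra hc; exact hj0 (if_neg hc)
    have hcj : c j ≠ 0 := by
      intro hc; apply hj0; show (if j ∈ V then c j else 0) = 0; rw [if_pos hjV, hc]
    have hdvd : (X i * X j) ∣ (∏ l, X l ^ c l : MvPolynomial σ k) := by
      rw [← Finset.mul_prod_erase Finset.univ (fun l => X l ^ c l) (Finset.mem_univ i)]
      exact mul_dvd_mul (dvd_pow_self _ hci)
        (dvd_trans (dvd_pow_self _ hcj)
          (Finset.dvd_prod_of_mem _ (Finset.mem_erase.mpr ⟨hji, Finset.mem_univ j⟩)))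
    obtain ⟨m, hm⟩ := hdvd
    rw [hm, pow_two]
    exact Ideal.mul_mem_right _ _ (Ideal.mul_mem_mul (hXP i hiV) (hXP j hjV))

end Aux

section Aux2
set_option linter.unusedSectionVars false
open scoped Classical

variable {k : Type*} [Field k] {q : ℕ}

/-- A prime containing `extGen i` contains some variable `X B` with `i ∈ B`. -/
lemma exists_X_mem_of_extGen_mem {P : Ideal (MvPolynomial (EIdx q) k)}
    (hP : P.IsPrime) {i : Fin q} (h : extGen k q i ∈ P) :
    ∃ B : EIdx q, i ∈ B.1 ∧ X B ∈ P := by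
  rw [extGen] at h
  haveI := hP
  obtain ⟨B, -, hB⟩ := Ideal.IsPrime.prod_mem_iff.mp h
  by_cases hiB : i ∈ B.1
  · exact ⟨B, hiB, by rwa [if_pos hiB] at hB⟩
  · rw [if_neg hiB] at hB
    exact absurd ((Ideal.eq_top_iff_one P).mpr hB) hP.ne_top

/-- `X B` divides `extGen i` whenever `i ∈ B`. -/
lemma X_dvd_extGen {B : EIdx q} {i : Fin q} (hiB : i ∈ B.1) :
    X B ∣ extGen k q i := by
  rw [extGen]
  have := Finset.dvd_prod_of_mem
    (fun A : EIdx q => if i ∈ A.1 then (X A : MvPolynomial (EIdx q) k) else 1)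
    (Finset.mem_univ B)
  rwa [if_pos hiB] at this

/-- Every minimal prime of the extremal ideal is generated by variables. -/
lemma minimalPrime_eq_spanX {P : Ideal (MvPolynomial (EIdx q) k)}
    (hP : P ∈ (extIdeal k q).minimalPrimes) :
    P = Ideal.span (X '' {B : EIdx q | X B ∈ P}) := by
  obtain ⟨⟨hprime, hle⟩, hmin⟩ := hP
  set V : Set (EIdx q) := {B | X B ∈ P} with hV
  set P' : Ideal (MvPolynomial (EIdx q) k) := Ideal.span (X '' V) with hP'
  have h1 : P' ≤ P := by
    rw [hP', Ideal.span_le]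
    rintro _ ⟨B, hB, rfl⟩
    exact hB
  have h2 : extIdeal k q ≤ P' := by
    rw [extIdeal, Ideal.span_le]
    rintro _ ⟨i, rfl⟩
    have hg : extGen k q i ∈ P := hle (Ideal.subset_span ⟨i, rfl⟩)
    obtain ⟨B, hiB, hXB⟩ := exists_X_mem_of_extGen_mem hprime hg
    obtain ⟨m, hm⟩ := X_dvd_extGen (k := k) hiB
    rw [hm]
    exact Ideal.mul_mem_right _ _ (Ideal.subset_span ⟨B, hXB, rfl⟩)
  exact le_antisymm (hmin ⟨isPrime_spanX V, h2⟩ h1) h1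

/-- The span of the top variable is a minimal prime of the extremal ideal. -/
lemma span_X_univ_mem_minimalPrimes (hq : 1 ≤ q) :
    Ideal.span {X (⟨Finset.univ, Finset.univ_nonempty_iff.mpr ⟨⟨0, hq⟩⟩⟩ : EIdx q)}
      ∈ (extIdeal k q).minimalPrimes := by
  set u : EIdx q := ⟨Finset.univ, Finset.univ_nonempty_iff.mpr ⟨⟨0, hq⟩⟩⟩ with hu
  have hsing : ({X u} : Set (MvPolynomial (EIdx q) k)) = X '' ({u} : Set (EIdx q)) := by
    rw [Set.image_singleton]
  have hprime : (Ideal.span {(X u : MvPolynomial (EIdx q) k)}).IsPrime := by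
    rw [hsing]; exact isPrime_spanX _
  have hle : extIdeal k q ≤ Ideal.span {(X u : MvPolynomial (EIdx q) k)} := by
    rw [extIdeal, Ideal.span_le]
    rintro _ ⟨i, rfl⟩
    obtain ⟨m, hm⟩ := X_dvd_extGen (k := k) (B := u) (i := i) (Finset.mem_univ i)
    rw [hm]
    exact Ideal.mul_mem_right _ _ (Ideal.subset_span rfl)
  refine ⟨⟨hprime, hle⟩, ?_⟩
  rintro Q ⟨hQprime, hQle⟩ hQ
  have hg : extGen k q ⟨0, hq⟩ ∈ Q := hQle (Ideal.subset_span ⟨⟨0, hq⟩, rfl⟩)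
  obtain ⟨B, hiB, hXB⟩ := exists_X_mem_of_extGen_mem hQprime hg
  have hBu : B = u := by
    have := hQ hXB
    rw [hsing, X_mem_spanX_iff] at this
    exact this
  rw [Ideal.span_le, Set.singleton_subset_iff]
  rw [hBu] at hXB
  exact hXB

end Aux2

open scoped Classical in
theorem stmt14 (k : Type*) [Field k] (q : ℕ) (hq : 1 ≤ q)
    (b : Finset (Fin q) → ℕ)
    -- `y^b` is a minimal monomial generator of `E_q^{(2)}`:
    (hmem : ymonF k q b ∈ symbPow (extIdeal k q) 2)
    (hminimal : ∀ A : EIdx q, 0 < b A.1 →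
      ymonF k q (fun B => if B = A.1 then b B - 1 else b B) ∉
        symbPow (extIdeal k q) 2) :
    (∀ A : Finset (Fin q), A.Nonempty → b A ≤ 2) ∧ b Finset.univ = 2 := by
  have hmem2 : ∀ P ∈ (extIdeal k q).minimalPrimes, ymonF k q b ∈ P ^ 2 := by
    intro P hP
    rw [symbPow] at hmem
    simp only [Submodule.mem_iInf] at hmem
    exact hmem P hP
  have key : ∀ A : Finset (Fin q), A.Nonempty → b A ≤ 2 := by
    intro A hA
    by_contra hgt
    push_neg at hgt
    set A' : EIdx q := ⟨A, hA⟩ with hA'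
    refine hminimal A' (by simp only [hA']; omega) ?_
    rw [symbPow]
    simp only [Submodule.mem_iInf]
    intro P hP
    have hPeq := minimalPrime_eq_spanX hP
    set V : Set (EIdx q) := {B : EIdx q | X B ∈ P} with hV
    set c' : EIdx q → ℕ := fun B => if B.1 = A'.1 then b B.1 - 1 else b B.1 with hc'
    have hform : ymonF k q (fun B => if B = A'.1 then b B - 1 else b B)
        = ∏ B : EIdx q, X B ^ c' B := by
      rw [ymonF]
    rw [hform, hPeq]
    apply mem_sq_of_two_le_wsum
    have hb := hmem2 P hP
    rw [hPeq, ymonF] at hb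
    have hD : 2 ≤ ∑ B : EIdx q, if B ∈ V then b B.1 else 0 :=
      two_le_wsum_of_mem_sq (k := k) V (fun B : EIdx q => b B.1) hb
    by_cases hAV : A' ∈ V
    · have hterm : (if A' ∈ V then c' A' else 0) = b A - 1 := by
        rw [if_pos hAV]
        show (if A'.1 = A'.1 then b A'.1 - 1 else b A'.1) = b A - 1
        rw [if_pos rfl]
      calc (2 : ℕ) ≤ b A - 1 := by omega
        _ = _ := hterm.symm
        _ ≤ _ := Finset.single_le_sum
              (f := fun B : EIdx q => if B ∈ V then c' B else 0)
              (fun i _ => Nat.zero_le _) (Finset.mem_univ A')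
    · have heq : ∀ B : EIdx q,
          (if B ∈ V then c' B else 0) = (if B ∈ V then b B.1 else 0) := by
        intro B
        by_cases hBV : B ∈ V
        · rw [if_pos hBV, if_pos hBV]
          have hBA : B.1 ≠ A'.1 := by
            intro hc
            exact hAV ((Subtype.ext hc : B = A') ▸ hBV)
          show (if B.1 = A'.1 then b B.1 - 1 else b B.1) = b B.1
          rw [if_neg hBA]
        · rw [if_neg hBV, if_neg hBV]
      rw [Finset.sum_congr rfl (fun B _ => heq B)]
      exact hD
  refine ⟨key, ?_⟩
  set u : EIdx q := ⟨Finset.univ, Finset.univ_nonempty_iff.mpr ⟨⟨0, hq⟩⟩⟩ with hu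
  have hmin := span_X_univ_mem_minimalPrimes (k := k) hq
  have hP2 := hmem2 _ hmin
  rw [ymonF] at hP2
  have hsing : ({X u} : Set (MvPolynomial (EIdx q) k)) = X '' ({u} : Set (EIdx q)) := by
    rw [Set.image_singleton]
  rw [hsing] at hP2
  have hge := two_le_wsum_of_mem_sq ({u} : Set (EIdx q)) (fun B : EIdx q => b B.1) hP2
  have h2 : 2 ≤ ∑ i : EIdx q, if i = u then b i.1 else 0 := by
    refine le_trans hge (Finset.sum_le_sum ?_)
    intro i _
    by_cases hi : i = u <;> simp [hi]
  rw [Finset.sum_ite_eq' Finset.univ u (fun B : EIdx q => b B.1)] at h2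
  simp only [Finset.mem_univ, if_true] at h2
  have hle2 : b Finset.univ ≤ 2 := key Finset.univ (Finset.univ_nonempty_iff.mpr ⟨⟨0, hq⟩⟩)
  have h3 : 2 ≤ b Finset.univ := h2
  omega
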